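/- Let u = (−1 + i√3)/2 ∈ ℂ and define, for n = 3 and n = 5, Δ_n(t) = det(I − t⁻¹·A_n·B_n⁻¹·A_n⁻¹ + A_n·B_n⁻¹·A_n⁻¹·B_n − t·B_n + B_n·A_n·B_n⁻¹·A_n⁻¹) / det(t·B_n − I), where A₃ = [[1,0,0],[−2,1,0],[1,−1,1]], B₃ = [[1,u,u²],[0,1,2u],[0,0,1]], A₅ = [[1,0,0,0,0],[−4,1,0,0,0],[6,−3,1,0,0],[−4,3,−2,1,0],[1,−1,1,−1,1]], B₅ = [[1,u,u²,u³,u⁴],[0,1,2u,3u²,4u³],[0,0,1,3u,6u²],[0,0,0,1,4u],[0,0,0,0,1]]. Then both Δ₃(t) and Δ₅(t) vanish to exactly first order at t = 1, the limit as t → 1 of Δ₅(t)/Δ₃(t) exists and equals −28/3; in particular |𝒜_{K,5}(1)| = 28/3. -/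

import Mathlib

open Matrix Filter

noncomputable def u41 : ℂ := (-1 + Complex.I * Real.sqrt 3) / 2

noncomputable def A3 : Matrix (Fin 3) (Fin 3) ℂ := !![1, 0, 0; -2, 1, 0; 1, -1, 1]

noncomputable def B3 : Matrix (Fin 3) (Fin 3) ℂ :=
  !![1, u41, u41 ^ 2; 0, 1, 2 * u41; 0, 0, 1]

noncomputable def A5 : Matrix (Fin 5) (Fin 5) ℂ :=
  !![1, 0, 0, 0, 0; -4, 1, 0, 0, 0; 6, -3, 1, 0, 0; -4, 3, -2, 1, 0; 1, -1, 1, -1, 1]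

noncomputable def B5 : Matrix (Fin 5) (Fin 5) ℂ :=
  !![1, u41, u41 ^ 2, u41 ^ 3, u41 ^ 4; 0, 1, 2 * u41, 3 * u41 ^ 2, 4 * u41 ^ 3;
     0, 0, 1, 3 * u41, 6 * u41 ^ 2; 0, 0, 0, 1, 4 * u41; 0, 0, 0, 0, 1]

/-- Wada's twisted Alexander invariant `Δ_{K,ρ₃}(t)` for the figure-eight knot. -/
noncomputable def Δ₃ (t : ℂ) : ℂ :=
  det ((1 : Matrix (Fin 3) (Fin 3) ℂ) - t⁻¹ • (A3 * B3⁻¹ * A3⁻¹) +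
      A3 * B3⁻¹ * A3⁻¹ * B3 - t • B3 + B3 * A3 * B3⁻¹ * A3⁻¹) /
    det (t • B3 - 1)

/-- Wada's twisted Alexander invariant `Δ_{K,ρ₅}(t)` for the figure-eight knot. -/
noncomputable def Δ₅ (t : ℂ) : ℂ :=
  det ((1 : Matrix (Fin 5) (Fin 5) ℂ) - t⁻¹ • (A5 * B5⁻¹ * A5⁻¹) +
      A5 * B5⁻¹ * A5⁻¹ * B5 - t • B5 + B5 * A5 * B5⁻¹ * A5⁻¹) /
    det (t • B5 - 1)


lemma hu : u41 ^ 2 = -1 - u41 := by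
  have hs : (Real.sqrt 3 : ℂ)^2 = 3 := by norm_cast; rw [Real.sq_sqrt]; norm_num
  unfold u41
  linear_combination (Complex.I^2/4) * hs + (3/4 : ℂ) * Complex.I_sq

noncomputable def Ai3m : Matrix (Fin 3) (Fin 3) ℂ :=
  !![((1:ℂ)), (0:ℂ), (0:ℂ);
    ((2:ℂ)), ((1:ℂ)), (0:ℂ);
    ((1:ℂ)), ((1:ℂ)), ((1:ℂ))]

noncomputable def Bi3m : Matrix (Fin 3) (Fin 3) ℂ :=
  !![((1:ℂ)), ((-1:ℂ)*u41), ((1:ℂ)*u41^2);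
    (0:ℂ), ((1:ℂ)), ((-2:ℂ)*u41);
    (0:ℂ), (0:ℂ), ((1:ℂ))]

noncomputable def P3m : Matrix (Fin 3) (Fin 3) ℂ :=
  !![((1:ℂ) +(-2:ℂ)*u41 +(1:ℂ)*u41^2), ((-1:ℂ)*u41 +(1:ℂ)*u41^2), ((1:ℂ)*u41^2);
    ((2:ℂ)*u41 +(-2:ℂ)*u41^2), ((1:ℂ) +(-2:ℂ)*u41^2), ((-2:ℂ)*u41 +(-2:ℂ)*u41^2);
    ((1:ℂ)*u41^2), ((1:ℂ)*u41 +(1:ℂ)*u41^2), ((1:ℂ) +(2:ℂ)*u41 +(1:ℂ)*u41^2)]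

noncomputable def Q3m : Matrix (Fin 3) (Fin 3) ℂ :=
  !![((1:ℂ) +(-2:ℂ)*u41 +(1:ℂ)*u41^2), ((-1:ℂ)*u41^2 +(1:ℂ)*u41^3), ((1:ℂ)*u41^4);
    ((2:ℂ)*u41 +(-2:ℂ)*u41^2), ((1:ℂ) +(-2:ℂ)*u41^3), ((-2:ℂ)*u41^2 +(-2:ℂ)*u41^3 +(-2:ℂ)*u41^4);
    ((1:ℂ)*u41^2), ((1:ℂ)*u41 +(1:ℂ)*u41^2 +(1:ℂ)*u41^3), ((1:ℂ) +(2:ℂ)*u41 +(3:ℂ)*u41^2 +(2:ℂ)*u41^3 +(1:ℂ)*u41^4)]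

noncomputable def R3m : Matrix (Fin 3) (Fin 3) ℂ :=
  !![((1:ℂ) +(-2:ℂ)*u41 +(3:ℂ)*u41^2 +(-2:ℂ)*u41^3 +(1:ℂ)*u41^4), ((1:ℂ)*u41^2 +(-1:ℂ)*u41^3 +(1:ℂ)*u41^4), ((1:ℂ)*u41^4);
    ((2:ℂ)*u41 +(-2:ℂ)*u41^2 +(2:ℂ)*u41^3), ((1:ℂ) +(2:ℂ)*u41^3), ((2:ℂ)*u41^2 +(2:ℂ)*u41^3);
    ((1:ℂ)*u41^2), ((1:ℂ)*u41 +(1:ℂ)*u41^2), ((1:ℂ) +(2:ℂ)*u41 +(1:ℂ)*u41^2)]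


set_option maxHeartbeats 4000000 in
lemma hA3inv : A3⁻¹ = Ai3m := by
  apply Matrix.inv_eq_right_inv
  ext i j
  fin_cases i <;> fin_cases j <;> simp [A3, Ai3m, Matrix.mul_apply, Fin.sum_univ_succ, Matrix.one_apply] <;> ring

set_option maxHeartbeats 4000000 in
lemma hB3inv : B3⁻¹ = Bi3m := by
  apply Matrix.inv_eq_right_inv
  ext i j
  fin_cases i <;> fin_cases j <;> simp [B3, Bi3m, Matrix.mul_apply, Fin.sum_univ_succ, Matrix.one_apply] <;> ring

set_option maxHeartbeats 4000000 in
lemma hP3 : A3 * B3⁻¹ * A3⁻¹ = P3m := by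
  rw [hA3inv, hB3inv]
  ext i j
  fin_cases i <;> fin_cases j <;> simp [A3, Ai3m, Bi3m, P3m, Matrix.mul_apply, Fin.sum_univ_succ, Matrix.one_apply] <;> ring

set_option maxHeartbeats 4000000 in
lemma hQ3 : P3m * B3 = Q3m := by
  ext i j
  fin_cases i <;> fin_cases j <;> simp [B3, P3m, Q3m, Matrix.mul_apply, Fin.sum_univ_succ, Matrix.one_apply] <;> ring

set_option maxHeartbeats 4000000 in
lemma hR3 : B3 * A3 * B3⁻¹ * A3⁻¹ = R3m := by
  rw [hA3inv, hB3inv]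
  ext i j
  fin_cases i <;> fin_cases j <;> simp [A3, B3, Ai3m, Bi3m, R3m, Matrix.mul_apply, Fin.sum_univ_succ, Matrix.one_apply] <;> ring

set_option maxHeartbeats 4000000 in
noncomputable def N3m (t : ℂ) : Matrix (Fin 3) (Fin 3) ℂ :=
  !![((3:ℂ) + (-4:ℂ)*u41 + (4:ℂ)*u41^2 + (-2:ℂ)*u41^3 + (1:ℂ)*u41^4 + (-1:ℂ)*t⁻¹ + (2:ℂ)*t⁻¹*u41 + (-1:ℂ)*t⁻¹*u41^2 + (-1:ℂ)*t), ((1:ℂ)*u41^4 + (1:ℂ)*t⁻¹*u41 + (-1:ℂ)*t⁻¹*u41^2 + (-1:ℂ)*t*u41), ((2:ℂ)*u41^4 + (-1:ℂ)*t⁻¹*u41^2 + (-1:ℂ)*t*u41^2);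
    ((4:ℂ)*u41 + (-4:ℂ)*u41^2 + (2:ℂ)*u41^3 + (-2:ℂ)*t⁻¹*u41 + (2:ℂ)*t⁻¹*u41^2), ((3:ℂ) + (-1:ℂ)*t⁻¹ + (2:ℂ)*t⁻¹*u41^2 + (-1:ℂ)*t), ((-2:ℂ)*u41^4 + (2:ℂ)*t⁻¹*u41 + (2:ℂ)*t⁻¹*u41^2 + (-2:ℂ)*t*u41);
    ((2:ℂ)*u41^2 + (-1:ℂ)*t⁻¹*u41^2), ((2:ℂ)*u41 + (2:ℂ)*u41^2 + (1:ℂ)*u41^3 + (-1:ℂ)*t⁻¹*u41 + (-1:ℂ)*t⁻¹*u41^2), ((3:ℂ) + (4:ℂ)*u41 + (4:ℂ)*u41^2 + (2:ℂ)*u41^3 + (1:ℂ)*u41^4 + (-1:ℂ)*t⁻¹ + (-2:ℂ)*t⁻¹*u41 + (-1:ℂ)*t⁻¹*u41^2 + (-1:ℂ)*t)]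

set_option maxHeartbeats 4000000 in
lemma hN3 (t : ℂ) :
    (1 : Matrix (Fin 3) (Fin 3) ℂ) - t⁻¹ • P3m + Q3m - t • B3 + R3m = N3m t := by
  ext i j
  fin_cases i <;> fin_cases j <;>
    simp [P3m, Q3m, R3m, B3, N3m, Matrix.one_apply, smul_eq_mul, Matrix.vecHead, Matrix.vecTail] <;> ring

set_option maxHeartbeats 4000000 in
lemma hnum3 (t : ℂ) (ht : t ≠ 0) :
    det ((1 : Matrix (Fin 3) (Fin 3) ℂ) - t⁻¹ • (A3 * B3⁻¹ * A3⁻¹) +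
        A3 * B3⁻¹ * A3⁻¹ * B3 - t • B3 + B3 * A3 * B3⁻¹ * A3⁻¹)
      = -((t - 1)^4 * (t^2 - 5*t + 1)) * t⁻¹^3 := by
  have hs : t * t⁻¹ = 1 := mul_inv_cancel₀ ht
  rw [hP3, hQ3, hR3, hN3]
  simp [N3m, Matrix.det_succ_row_zero, Fin.sum_univ_succ, Fin.succAbove, Fin.castSucc, Fin.castAdd, Fin.castLE, Matrix.smul_apply, Matrix.one_apply, smul_eq_mul]
  linear_combination ((-20:ℂ) +
    (-12:ℂ)*u41^2 +
    (-3:ℂ)*u41^4 +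
    (24:ℂ)*t⁻¹ +
    (4:ℂ)*t⁻¹*u41^2 +
    (-1:ℂ)*t⁻¹*u41^4 +
    (-9:ℂ)*t⁻¹^2 +
    (24:ℂ)*t +
    (4:ℂ)*t*u41^2 +
    (-1:ℂ)*t*u41^4 +
    (-38:ℂ)*t*t⁻¹ +
    (27:ℂ)*t*t⁻¹^2 +
    (-9:ℂ)*t^2 +
    (27:ℂ)*t^2*t⁻¹ +
    (-38:ℂ)*t^2*t⁻¹^2 +
    (1:ℂ)*t^3 +
    (-9:ℂ)*t^3*t⁻¹ +
    (27:ℂ)*t^3*t⁻¹^2 +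
    (1:ℂ)*t^4*t⁻¹ +
    (-9:ℂ)*t^4*t⁻¹^2 +
    (1:ℂ)*t^5*t⁻¹^2) * hs +
    ((7:ℂ) +
    (-7:ℂ)*u41 +
    (12:ℂ)*u41^2 +
    (-5:ℂ)*u41^3 +
    (8:ℂ)*u41^4 +
    (-3:ℂ)*u41^5 +
    (3:ℂ)*u41^6 +
    (-3:ℂ)*t⁻¹ +
    (3:ℂ)*t⁻¹*u41 +
    (-4:ℂ)*t⁻¹*u41^2 +
    (1:ℂ)*t⁻¹*u41^3 +
    (-1:ℂ)*t⁻¹*u41^5 +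
    (1:ℂ)*t⁻¹*u41^6 +
    (-3:ℂ)*t +
    (3:ℂ)*t*u41 +
    (-4:ℂ)*t*u41^2 +
    (1:ℂ)*t*u41^3 +
    (-1:ℂ)*t*u41^5 +
    (1:ℂ)*t*u41^6) * hu

set_option maxHeartbeats 4000000 in
lemma hden3 (t : ℂ) : det (t • B3 - (1 : Matrix (Fin 3) (Fin 3) ℂ)) = (t - 1)^3 := by
  simp [B3, Fin.val_succ, Matrix.det_succ_row_zero, Fin.sum_univ_succ, Fin.succAbove, Fin.castSucc, Fin.castAdd, Fin.castLE, Matrix.smul_apply, Matrix.one_apply, smul_eq_mul]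
  ring

noncomputable def Ai5m : Matrix (Fin 5) (Fin 5) ℂ :=
  !![((1:ℂ)), (0:ℂ), (0:ℂ), (0:ℂ), (0:ℂ);
    ((4:ℂ)), ((1:ℂ)), (0:ℂ), (0:ℂ), (0:ℂ);
    ((6:ℂ)), ((3:ℂ)), ((1:ℂ)), (0:ℂ), (0:ℂ);
    ((4:ℂ)), ((3:ℂ)), ((2:ℂ)), ((1:ℂ)), (0:ℂ);
    ((1:ℂ)), ((1:ℂ)), ((1:ℂ)), ((1:ℂ)), ((1:ℂ))]

noncomputable def Bi5m : Matrix (Fin 5) (Fin 5) ℂ :=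
  !![((1:ℂ)), ((-1:ℂ)*u41), ((1:ℂ)*u41^2), ((-1:ℂ)*u41^3), ((1:ℂ)*u41^4);
    (0:ℂ), ((1:ℂ)), ((-2:ℂ)*u41), ((3:ℂ)*u41^2), ((-4:ℂ)*u41^3);
    (0:ℂ), (0:ℂ), ((1:ℂ)), ((-3:ℂ)*u41), ((6:ℂ)*u41^2);
    (0:ℂ), (0:ℂ), (0:ℂ), ((1:ℂ)), ((-4:ℂ)*u41);
    (0:ℂ), (0:ℂ), (0:ℂ), (0:ℂ), ((1:ℂ))]

noncomputable def P5m : Matrix (Fin 5) (Fin 5) ℂ :=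
  !![((1:ℂ) +(-4:ℂ)*u41 +(6:ℂ)*u41^2 +(-4:ℂ)*u41^3 +(1:ℂ)*u41^4), ((-1:ℂ)*u41 +(3:ℂ)*u41^2 +(-3:ℂ)*u41^3 +(1:ℂ)*u41^4), ((1:ℂ)*u41^2 +(-2:ℂ)*u41^3 +(1:ℂ)*u41^4), ((-1:ℂ)*u41^3 +(1:ℂ)*u41^4), ((1:ℂ)*u41^4);
    ((4:ℂ)*u41 +(-12:ℂ)*u41^2 +(12:ℂ)*u41^3 +(-4:ℂ)*u41^4), ((1:ℂ) +(-2:ℂ)*u41 +(-3:ℂ)*u41^2 +(8:ℂ)*u41^3 +(-4:ℂ)*u41^4), ((-2:ℂ)*u41 +(2:ℂ)*u41^2 +(4:ℂ)*u41^3 +(-4:ℂ)*u41^4), ((3:ℂ)*u41^2 +(-4:ℂ)*u41^4), ((-4:ℂ)*u41^3 +(-4:ℂ)*u41^4);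
    ((6:ℂ)*u41^2 +(-12:ℂ)*u41^3 +(6:ℂ)*u41^4), ((3:ℂ)*u41 +(-3:ℂ)*u41^2 +(-6:ℂ)*u41^3 +(6:ℂ)*u41^4), ((1:ℂ) +(-6:ℂ)*u41^2 +(6:ℂ)*u41^4), ((-3:ℂ)*u41 +(-3:ℂ)*u41^2 +(6:ℂ)*u41^3 +(6:ℂ)*u41^4), ((6:ℂ)*u41^2 +(12:ℂ)*u41^3 +(6:ℂ)*u41^4);
    ((4:ℂ)*u41^3 +(-4:ℂ)*u41^4), ((3:ℂ)*u41^2 +(-4:ℂ)*u41^4), ((2:ℂ)*u41 +(2:ℂ)*u41^2 +(-4:ℂ)*u41^3 +(-4:ℂ)*u41^4), ((1:ℂ) +(2:ℂ)*u41 +(-3:ℂ)*u41^2 +(-8:ℂ)*u41^3 +(-4:ℂ)*u41^4), ((-4:ℂ)*u41 +(-12:ℂ)*u41^2 +(-12:ℂ)*u41^3 +(-4:ℂ)*u41^4);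
    ((1:ℂ)*u41^4), ((1:ℂ)*u41^3 +(1:ℂ)*u41^4), ((1:ℂ)*u41^2 +(2:ℂ)*u41^3 +(1:ℂ)*u41^4), ((1:ℂ)*u41 +(3:ℂ)*u41^2 +(3:ℂ)*u41^3 +(1:ℂ)*u41^4), ((1:ℂ) +(4:ℂ)*u41 +(6:ℂ)*u41^2 +(4:ℂ)*u41^3 +(1:ℂ)*u41^4)]

noncomputable def Q5m : Matrix (Fin 5) (Fin 5) ℂ :=
  !![((1:ℂ) +(-4:ℂ)*u41 +(6:ℂ)*u41^2 +(-4:ℂ)*u41^3 +(1:ℂ)*u41^4), ((-1:ℂ)*u41^2 +(3:ℂ)*u41^3 +(-3:ℂ)*u41^4 +(1:ℂ)*u41^5), ((1:ℂ)*u41^4 +(-2:ℂ)*u41^5 +(1:ℂ)*u41^6), ((-1:ℂ)*u41^6 +(1:ℂ)*u41^7), ((1:ℂ)*u41^8);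
    ((4:ℂ)*u41 +(-12:ℂ)*u41^2 +(12:ℂ)*u41^3 +(-4:ℂ)*u41^4), ((1:ℂ) +(-2:ℂ)*u41 +(1:ℂ)*u41^2 +(-4:ℂ)*u41^3 +(8:ℂ)*u41^4 +(-4:ℂ)*u41^5), ((-2:ℂ)*u41^2 +(2:ℂ)*u41^3 +(4:ℂ)*u41^5 +(-4:ℂ)*u41^6), ((3:ℂ)*u41^4 +(-4:ℂ)*u41^7), ((-4:ℂ)*u41^6 +(-4:ℂ)*u41^7 +(-4:ℂ)*u41^8);
    ((6:ℂ)*u41^2 +(-12:ℂ)*u41^3 +(6:ℂ)*u41^4), ((3:ℂ)*u41 +(-3:ℂ)*u41^2 +(-6:ℂ)*u41^4 +(6:ℂ)*u41^5), ((1:ℂ) +(-6:ℂ)*u41^3 +(6:ℂ)*u41^6), ((-3:ℂ)*u41^2 +(-3:ℂ)*u41^3 +(-3:ℂ)*u41^4 +(6:ℂ)*u41^5 +(6:ℂ)*u41^6 +(6:ℂ)*u41^7), ((6:ℂ)*u41^4 +(12:ℂ)*u41^5 +(18:ℂ)*u41^6 +(12:ℂ)*u41^7 +(6:ℂ)*u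41^8);
    ((4:ℂ)*u41^3 +(-4:ℂ)*u41^4), ((3:ℂ)*u41^2 +(-4:ℂ)*u41^5), ((2:ℂ)*u41 +(2:ℂ)*u41^2 +(2:ℂ)*u41^3 +(-4:ℂ)*u41^4 +(-4:ℂ)*u41^5 +(-4:ℂ)*u41^6), ((1:ℂ) +(2:ℂ)*u41 +(3:ℂ)*u41^2 +(-2:ℂ)*u41^3 +(-7:ℂ)*u41^4 +(-12:ℂ)*u41^5 +(-8:ℂ)*u41^6 +(-4:ℂ)*u41^7), ((-4:ℂ)*u41^2 +(-12:ℂ)*u41^3 +(-24:ℂ)*u41^4 +(-28:ℂ)*u41^5 +(-24:ℂ)*u41^6 +(-12:ℂ)*u41^7 +(-4:ℂ)*u41^8);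
    ((1:ℂ)*u41^4), ((1:ℂ)*u41^3 +(1:ℂ)*u41^4 +(1:ℂ)*u41^5), ((1:ℂ)*u41^2 +(2:ℂ)*u41^3 +(3:ℂ)*u41^4 +(2:ℂ)*u41^5 +(1:ℂ)*u41^6), ((1:ℂ)*u41 +(3:ℂ)*u41^2 +(6:ℂ)*u41^3 +(7:ℂ)*u41^4 +(6:ℂ)*u41^5 +(3:ℂ)*u41^6 +(1:ℂ)*u41^7), ((1:ℂ) +(4:ℂ)*u41 +(10:ℂ)*u41^2 +(16:ℂ)*u41^3 +(19:ℂ)*u41^4 +(16:ℂ)*u41^5 +(10:ℂ)*u41^6 +(4:ℂ)*u41^7 +(1:ℂ)*u41^8)]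

noncomputable def R5m : Matrix (Fin 5) (Fin 5) ℂ :=
  !![((1:ℂ) +(-4:ℂ)*u41 +(10:ℂ)*u41^2 +(-16:ℂ)*u41^3 +(19:ℂ)*u41^4 +(-16:ℂ)*u41^5 +(10:ℂ)*u41^6 +(-4:ℂ)*u41^7 +(1:ℂ)*u41^8), ((1:ℂ)*u41^2 +(-3:ℂ)*u41^3 +(6:ℂ)*u41^4 +(-7:ℂ)*u41^5 +(6:ℂ)*u41^6 +(-3:ℂ)*u41^7 +(1:ℂ)*u41^8), ((1:ℂ)*u41^4 +(-2:ℂ)*u41^5 +(3:ℂ)*u41^6 +(-2:ℂ)*u41^7 +(1:ℂ)*u41^8), ((1:ℂ)*u41^6 +(-1:ℂ)*u41^7 +(1:ℂ)*u41^8), ((1:ℂ)*u41^8);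
    ((4:ℂ)*u41 +(-12:ℂ)*u41^2 +(24:ℂ)*u41^3 +(-28:ℂ)*u41^4 +(24:ℂ)*u41^5 +(-12:ℂ)*u41^6 +(4:ℂ)*u41^7), ((1:ℂ) +(-2:ℂ)*u41 +(3:ℂ)*u41^2 +(2:ℂ)*u41^3 +(-7:ℂ)*u41^4 +(12:ℂ)*u41^5 +(-8:ℂ)*u41^6 +(4:ℂ)*u41^7), ((2:ℂ)*u41^2 +(-2:ℂ)*u41^3 +(2:ℂ)*u41^4 +(4:ℂ)*u41^5 +(-4:ℂ)*u41^6 +(4:ℂ)*u41^7), ((3:ℂ)*u41^4 +(4:ℂ)*u41^7), ((4:ℂ)*u41^6 +(4:ℂ)*u41^7);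
    ((6:ℂ)*u41^2 +(-12:ℂ)*u41^3 +(18:ℂ)*u41^4 +(-12:ℂ)*u41^5 +(6:ℂ)*u41^6), ((3:ℂ)*u41 +(-3:ℂ)*u41^2 +(3:ℂ)*u41^3 +(6:ℂ)*u41^4 +(-6:ℂ)*u41^5 +(6:ℂ)*u41^6), ((1:ℂ) +(6:ℂ)*u41^3 +(6:ℂ)*u41^6), ((3:ℂ)*u41^2 +(3:ℂ)*u41^3 +(6:ℂ)*u41^5 +(6:ℂ)*u41^6), ((6:ℂ)*u41^4 +(12:ℂ)*u41^5 +(6:ℂ)*u41^6);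
    ((4:ℂ)*u41^3 +(-4:ℂ)*u41^4 +(4:ℂ)*u41^5), ((3:ℂ)*u41^2 +(4:ℂ)*u41^5), ((2:ℂ)*u41 +(2:ℂ)*u41^2 +(4:ℂ)*u41^4 +(4:ℂ)*u41^5), ((1:ℂ) +(2:ℂ)*u41 +(1:ℂ)*u41^2 +(4:ℂ)*u41^3 +(8:ℂ)*u41^4 +(4:ℂ)*u41^5), ((4:ℂ)*u41^2 +(12:ℂ)*u41^3 +(12:ℂ)*u41^4 +(4:ℂ)*u41^5);
    ((1:ℂ)*u41^4), ((1:ℂ)*u41^3 +(1:ℂ)*u41^4), ((1:ℂ)*u41^2 +(2:ℂ)*u41^3 +(1:ℂ)*u41^4), ((1:ℂ)*u41 +(3:ℂ)*u41^2 +(3:ℂ)*u41^3 +(1:ℂ)*u41^4), ((1:ℂ) +(4:ℂ)*u41 +(6:ℂ)*u41^2 +(4:ℂ)*u41^3 +(1:ℂ)*u41^4)]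


set_option maxHeartbeats 4000000 in
lemma hA5inv : A5⁻¹ = Ai5m := by
  apply Matrix.inv_eq_right_inv
  ext i j
  fin_cases i <;> fin_cases j <;> simp [A5, Ai5m, Matrix.mul_apply, Fin.sum_univ_succ, Matrix.one_apply] <;> ring

set_option maxHeartbeats 4000000 in
lemma hB5inv : B5⁻¹ = Bi5m := by
  apply Matrix.inv_eq_right_inv
  ext i j
  fin_cases i <;> fin_cases j <;> simp [B5, Bi5m, Matrix.mul_apply, Fin.sum_univ_succ, Matrix.one_apply] <;> ring

set_option maxHeartbeats 4000000 in
lemma hP5 : A5 * B5⁻¹ * A5⁻¹ = P5m := by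
  rw [hA5inv, hB5inv]
  ext i j
  fin_cases i <;> fin_cases j <;> simp [A5, Ai5m, Bi5m, P5m, Matrix.mul_apply, Fin.sum_univ_succ, Matrix.one_apply] <;> ring

set_option maxHeartbeats 4000000 in
lemma hQ5 : P5m * B5 = Q5m := by
  ext i j
  fin_cases i <;> fin_cases j <;> simp [B5, P5m, Q5m, Matrix.mul_apply, Fin.sum_univ_succ, Matrix.one_apply] <;> ring

set_option maxHeartbeats 4000000 in
lemma hR5 : B5 * A5 * B5⁻¹ * A5⁻¹ = R5m := by
  rw [hA5inv, hB5inv]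
  ext i j
  fin_cases i <;> fin_cases j <;> simp [A5, B5, Ai5m, Bi5m, R5m, Matrix.mul_apply, Fin.sum_univ_succ, Matrix.one_apply] <;> ring

set_option maxHeartbeats 4000000 in
noncomputable def N5m (t : ℂ) : Matrix (Fin 5) (Fin 5) ℂ :=
  !![((3:ℂ) + (-8:ℂ)*u41 + (16:ℂ)*u41^2 + (-20:ℂ)*u41^3 + (20:ℂ)*u41^4 + (-16:ℂ)*u41^5 + (10:ℂ)*u41^6 + (-4:ℂ)*u41^7 + (1:ℂ)*u41^8 + (-1:ℂ)*t⁻¹ + (4:ℂ)*t⁻¹*u41 + (-6:ℂ)*t⁻¹*u41^2 + (4:ℂ)*t⁻¹*u41^3 + (-1:ℂ)*t⁻¹*u41^4 + (-1:ℂ)*t), ((3:ℂ)*u41^4 + (-6:ℂ)*u41^5 + (6:ℂ)*u41^6 + (-3:ℂ)*u41^7 + (1:ℂ)*u41^8 + (1:ℂ)*t⁻¹*u41 + (-3:ℂ)*t⁻¹*u41^2 + (3:ℂ)*t⁻¹*u41^3 + (-1:ℂ)*t⁻¹*u41^4 + (-1:ℂ)*t*u41), ((2:ℂ)*u41^4 +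 (-4:ℂ)*u41^5 + (4:ℂ)*u41^6 + (-2:ℂ)*u41^7 + (1:ℂ)*u41^8 + (-1:ℂ)*t⁻¹*u41^2 + (2:ℂ)*t⁻¹*u41^3 + (-1:ℂ)*t⁻¹*u41^4 + (-1:ℂ)*t*u41^2), ((1:ℂ)*u41^8 + (1:ℂ)*t⁻¹*u41^3 + (-1:ℂ)*t⁻¹*u41^4 + (-1:ℂ)*t*u41^3), ((2:ℂ)*u41^8 + (-1:ℂ)*t⁻¹*u41^4 + (-1:ℂ)*t*u41^4);
    ((8:ℂ)*u41 + (-24:ℂ)*u41^2 + (36:ℂ)*u41^3 + (-32:ℂ)*u41^4 + (24:ℂ)*u41^5 + (-12:ℂ)*u41^6 + (4:ℂ)*u41^7 + (-4:ℂ)*t⁻¹*u41 + (12:ℂ)*t⁻¹*u41^2 + (-12:ℂ)*t⁻¹*u41^3 + (4:ℂ)*t⁻¹*u41^4), ((3:ℂ) + (-4:ℂ)*u41 + (4:ℂ)*u41^2 + (-2:ℂ)*u41^3 + (1:ℂ)*u41^4 + (8:ℂ)*u41^5 + (-8:ℂ)*u41^6 + (4:ℂ)*u41^7 + (-1:ℂ)*t⁻¹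 + (2:ℂ)*t⁻¹*u41 + (3:ℂ)*t⁻¹*u41^2 + (-8:ℂ)*t⁻¹*u41^3 + (4:ℂ)*t⁻¹*u41^4 + (-1:ℂ)*t), ((2:ℂ)*u41^4 + (8:ℂ)*u41^5 + (-8:ℂ)*u41^6 + (4:ℂ)*u41^7 + (2:ℂ)*t⁻¹*u41 + (-2:ℂ)*t⁻¹*u41^2 + (-4:ℂ)*t⁻¹*u41^3 + (4:ℂ)*t⁻¹*u41^4 + (-2:ℂ)*t*u41), ((6:ℂ)*u41^4 + (-3:ℂ)*t⁻¹*u41^2 + (4:ℂ)*t⁻¹*u41^4 + (-3:ℂ)*t*u41^2), ((-4:ℂ)*u41^8 + (4:ℂ)*t⁻¹*u41^3 + (4:ℂ)*t⁻¹*u41^4 + (-4:ℂ)*t*u41^3);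
    ((12:ℂ)*u41^2 + (-24:ℂ)*u41^3 + (24:ℂ)*u41^4 + (-12:ℂ)*u41^5 + (6:ℂ)*u41^6 + (-6:ℂ)*t⁻¹*u41^2 + (12:ℂ)*t⁻¹*u41^3 + (-6:ℂ)*t⁻¹*u41^4), ((6:ℂ)*u41 + (-6:ℂ)*u41^2 + (3:ℂ)*u41^3 + (6:ℂ)*u41^6 + (-3:ℂ)*t⁻¹*u41 + (3:ℂ)*t⁻¹*u41^2 + (6:ℂ)*t⁻¹*u41^3 + (-6:ℂ)*t⁻¹*u41^4), ((3:ℂ) + (12:ℂ)*u41^6 + (-1:ℂ)*t⁻¹ + (6:ℂ)*t⁻¹*u41^2 + (-6:ℂ)*t⁻¹*u41^4 + (-1:ℂ)*t), ((-3:ℂ)*u41^4 + (12:ℂ)*u41^5 + (12:ℂ)*u41^6 + (6:ℂ)*u41^7 + (3:ℂ)*t⁻¹*u41 + (3:ℂ)*t⁻¹*u41^2 + (-6:ℂ)*t⁻¹*u41^3 + (-6:ℂ)*t⁻¹*u41^4 + (-3:ℂ)*t*u41), ((12:ℂ)*u41^4 + (24:ℂ)*u41^5 + (24:ℂ)*u41^6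 + (12:ℂ)*u41^7 + (6:ℂ)*u41^8 + (-6:ℂ)*t⁻¹*u41^2 + (-12:ℂ)*t⁻¹*u41^3 + (-6:ℂ)*t⁻¹*u41^4 + (-6:ℂ)*t*u41^2);
    ((8:ℂ)*u41^3 + (-8:ℂ)*u41^4 + (4:ℂ)*u41^5 + (-4:ℂ)*t⁻¹*u41^3 + (4:ℂ)*t⁻¹*u41^4), ((6:ℂ)*u41^2 + (-3:ℂ)*t⁻¹*u41^2 + (4:ℂ)*t⁻¹*u41^4), ((4:ℂ)*u41 + (4:ℂ)*u41^2 + (2:ℂ)*u41^3 + (-4:ℂ)*u41^6 + (-2:ℂ)*t⁻¹*u41 + (-2:ℂ)*t⁻¹*u41^2 + (4:ℂ)*t⁻¹*u41^3 + (4:ℂ)*t⁻¹*u41^4), ((3:ℂ) + (4:ℂ)*u41 + (4:ℂ)*u41^2 + (2:ℂ)*u41^3 + (1:ℂ)*u41^4 + (-8:ℂ)*u41^5 + (-8:ℂ)*u41^6 + (-4:ℂ)*u41^7 + (-1:ℂ)*t⁻¹ + (-2:ℂ)*t⁻¹*u41 + (3:ℂ)*t⁻¹*u41^2 + (8:ℂ)*t⁻¹*u41^3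 + (4:ℂ)*t⁻¹*u41^4 + (-1:ℂ)*t), ((-12:ℂ)*u41^4 + (-24:ℂ)*u41^5 + (-24:ℂ)*u41^6 + (-12:ℂ)*u41^7 + (-4:ℂ)*u41^8 + (4:ℂ)*t⁻¹*u41 + (12:ℂ)*t⁻¹*u41^2 + (12:ℂ)*t⁻¹*u41^3 + (4:ℂ)*t⁻¹*u41^4 + (-4:ℂ)*t*u41);
    ((2:ℂ)*u41^4 + (-1:ℂ)*t⁻¹*u41^4), ((2:ℂ)*u41^3 + (2:ℂ)*u41^4 + (1:ℂ)*u41^5 + (-1:ℂ)*t⁻¹*u41^3 + (-1:ℂ)*t⁻¹*u41^4), ((2:ℂ)*u41^2 + (4:ℂ)*u41^3 + (4:ℂ)*u41^4 + (2:ℂ)*u41^5 + (1:ℂ)*u41^6 + (-1:ℂ)*t⁻¹*u41^2 + (-2:ℂ)*t⁻¹*u41^3 + (-1:ℂ)*t⁻¹*u41^4), ((2:ℂ)*u41 + (6:ℂ)*u41^2 + (9:ℂ)*u41^3 + (8:ℂ)*u41^4 + (6:ℂ)*u41^5 + (3:ℂ)*u41^6 + (1:ℂ)*u41^7 + (-1:ℂ)*t⁻¹*u41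 + (-3:ℂ)*t⁻¹*u41^2 + (-3:ℂ)*t⁻¹*u41^3 + (-1:ℂ)*t⁻¹*u41^4), ((3:ℂ) + (8:ℂ)*u41 + (16:ℂ)*u41^2 + (20:ℂ)*u41^3 + (20:ℂ)*u41^4 + (16:ℂ)*u41^5 + (10:ℂ)*u41^6 + (4:ℂ)*u41^7 + (1:ℂ)*u41^8 + (-1:ℂ)*t⁻¹ + (-4:ℂ)*t⁻¹*u41 + (-6:ℂ)*t⁻¹*u41^2 + (-4:ℂ)*t⁻¹*u41^3 + (-1:ℂ)*t⁻¹*u41^4 + (-1:ℂ)*t)]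

set_option maxHeartbeats 4000000 in
lemma hN5 (t : ℂ) :
    (1 : Matrix (Fin 5) (Fin 5) ℂ) - t⁻¹ • P5m + Q5m - t • B5 + R5m = N5m t := by
  ext i j
  fin_cases i <;> fin_cases j <;>
    simp [P5m, Q5m, R5m, B5, N5m, Matrix.one_apply, smul_eq_mul, Matrix.vecHead, Matrix.vecTail] <;> ring

set_option maxHeartbeats 4000000 in
lemma hnum5 (t : ℂ) (ht : t ≠ 0) :
    det ((1 : Matrix (Fin 5) (Fin 5) ℂ) - t⁻¹ • (A5 * B5⁻¹ * A5⁻¹) +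
        A5 * B5⁻¹ * A5⁻¹ * B5 - t • B5 + B5 * A5 * B5⁻¹ * A5⁻¹)
      = -((t - 1)^6 * (t^4 - 9*t^3 + 44*t^2 - 9*t + 1)) * t⁻¹^5 := by
  have hs : t * t⁻¹ = 1 := mul_inv_cancel₀ ht
  rw [hP5, hQ5, hR5, hN5]
  simp [N5m, Matrix.det_succ_row_zero, Fin.sum_univ_succ, Fin.succAbove, Fin.castSucc, Fin.castAdd, Fin.castLE, Matrix.smul_apply, Matrix.one_apply, smul_eq_mul]
  linear_combination ((-532:ℂ) +
    (-180:ℂ)*u41^2 +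
    (-909:ℂ)*u41^4 +
    (-984:ℂ)*u41^6 +
    (-1611:ℂ)*u41^8 +
    (-364:ℂ)*u41^10 +
    (387:ℂ)*u41^12 +
    (416:ℂ)*u41^14 +
    (39:ℂ)*u41^16 +
    (-60:ℂ)*u41^18 +
    (-3:ℂ)*u41^20 +
    (630:ℂ)*t⁻¹ +
    (480:ℂ)*t⁻¹*u41^2 +
    (384:ℂ)*t⁻¹*u41^4 +
    (-208:ℂ)*t⁻¹*u41^6 +
    (27:ℂ)*t⁻¹*u41^8 +
    (-356:ℂ)*t⁻¹*u41^10 +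
    (31:ℂ)*t⁻¹*u41^12 +
    (88:ℂ)*t⁻¹*u41^14 +
    (-20:ℂ)*t⁻¹*u41^16 +
    (-4:ℂ)*t⁻¹*u41^18 +
    (1:ℂ)*t⁻¹*u41^20 +
    (-368:ℂ)*t⁻¹^2 +
    (-180:ℂ)*t⁻¹^2*u41^2 +
    (63:ℂ)*t⁻¹^2*u41^4 +
    (72:ℂ)*t⁻¹^2*u41^6 +
    (-33:ℂ)*t⁻¹^2*u41^8 +
    (108:ℂ)*t⁻¹^3 +
    (20:ℂ)*t⁻¹^3*u41^2 +
    (-21:ℂ)*t⁻¹^3*u41^4 +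
    (8:ℂ)*t⁻¹^3*u41^6 +
    (-1:ℂ)*t⁻¹^3*u41^8 +
    (-15:ℂ)*t⁻¹^4 +
    (630:ℂ)*t +
    (480:ℂ)*t*u41^2 +
    (384:ℂ)*t*u41^4 +
    (-208:ℂ)*t*u41^6 +
    (27:ℂ)*t*u41^8 +
    (-356:ℂ)*t*u41^10 +
    (31:ℂ)*t*u41^12 +
    (88:ℂ)*t*u41^14 +
    (-20:ℂ)*t*u41^16 +
    (-4:ℂ)*t*u41^18 +
    (1:ℂ)*t*u41^20 +
    (-1072:ℂ)*t*t⁻¹ +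
    (-360:ℂ)*t*t⁻¹*u41^2 +
    (318:ℂ)*t*t⁻¹*u41^4 +
    (144:ℂ)*t*t⁻¹*u41^6 +
    (-198:ℂ)*t*t⁻¹*u41^8 +
    (36:ℂ)*t*t⁻¹*u41^10 +
    (3:ℂ)*t*t⁻¹*u41^12 +
    (900:ℂ)*t*t⁻¹^2 +
    (60:ℂ)*t*t⁻¹^2*u41^2 +
    (-127:ℂ)*t*t⁻¹^2*u41^4 +
    (120:ℂ)*t*t⁻¹^2*u41^6 +
    (-55:ℂ)*t*t⁻¹^2*u41^8 +
    (12:ℂ)*t*t⁻¹^2*u41^10 +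
    (-1:ℂ)*t*t⁻¹^2*u41^12 +
    (-428:ℂ)*t*t⁻¹^3 +
    (113:ℂ)*t*t⁻¹^4 +
    (-368:ℂ)*t^2 +
    (-180:ℂ)*t^2*u41^2 +
    (63:ℂ)*t^2*u41^4 +
    (72:ℂ)*t^2*u41^6 +
    (-33:ℂ)*t^2*u41^8 +
    (900:ℂ)*t^2*t⁻¹ +
    (60:ℂ)*t^2*t⁻¹*u41^2 +
    (-127:ℂ)*t^2*t⁻¹*u41^4 +
    (120:ℂ)*t^2*t⁻¹*u41^6 +
    (-55:ℂ)*t^2*t⁻¹*u41^8 +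
    (12:ℂ)*t^2*t⁻¹*u41^10 +
    (-1:ℂ)*t^2*t⁻¹*u41^12 +
    (-1162:ℂ)*t^2*t⁻¹^2 +
    (910:ℂ)*t^2*t⁻¹^3 +
    (-428:ℂ)*t^2*t⁻¹^4 +
    (108:ℂ)*t^3 +
    (20:ℂ)*t^3*u41^2 +
    (-21:ℂ)*t^3*u41^4 +
    (8:ℂ)*t^3*u41^6 +
    (-1:ℂ)*t^3*u41^8 +
    (-428:ℂ)*t^3*t⁻¹ +
    (910:ℂ)*t^3*t⁻¹^2 +
    (-1162:ℂ)*t^3*t⁻¹^3 +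
    (910:ℂ)*t^3*t⁻¹^4 +
    (-15:ℂ)*t^4 +
    (113:ℂ)*t^4*t⁻¹ +
    (-428:ℂ)*t^4*t⁻¹^2 +
    (910:ℂ)*t^4*t⁻¹^3 +
    (-1162:ℂ)*t^4*t⁻¹^4 +
    (1:ℂ)*t^5 +
    (-15:ℂ)*t^5*t⁻¹ +
    (113:ℂ)*t^5*t⁻¹^2 +
    (-428:ℂ)*t^5*t⁻¹^3 +
    (910:ℂ)*t^5*t⁻¹^4 +
    (1:ℂ)*t^6*t⁻¹ +
    (-15:ℂ)*t^6*t⁻¹^2 +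
    (113:ℂ)*t^6*t⁻¹^3 +
    (-428:ℂ)*t^6*t⁻¹^4 +
    (1:ℂ)*t^7*t⁻¹^2 +
    (-15:ℂ)*t^7*t⁻¹^3 +
    (113:ℂ)*t^7*t⁻¹^4 +
    (1:ℂ)*t^8*t⁻¹^3 +
    (-15:ℂ)*t^8*t⁻¹^4 +
    (1:ℂ)*t^9*t⁻¹^4) * hs +
    ((-289:ℂ) +
    (289:ℂ)*u41 +
    (900:ℂ)*u41^2 +
    (-1189:ℂ)*u41^3 +
    (1822:ℂ)*u41^4 +
    (-633:ℂ)*u41^5 +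
    (1691:ℂ)*u41^6 +
    (-1058:ℂ)*u41^7 +
    (2841:ℂ)*u41^8 +
    (-1783:ℂ)*u41^9 +
    (3330:ℂ)*u41^10 +
    (-1547:ℂ)*u41^11 +
    (2552:ℂ)*u41^12 +
    (-1005:ℂ)*u41^13 +
    (1125:ℂ)*u41^14 +
    (-120:ℂ)*u41^15 +
    (231:ℂ)*u41^16 +
    (-111:ℂ)*u41^17 +
    (132:ℂ)*u41^18 +
    (-21:ℂ)*u41^19 +
    (24:ℂ)*u41^20 +
    (-3:ℂ)*u41^21 +
    (3:ℂ)*u41^22 +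
    (225:ℂ)*t⁻¹ +
    (-225:ℂ)*t⁻¹*u41 +
    (-600:ℂ)*t⁻¹*u41^2 +
    (825:ℂ)*t⁻¹*u41^3 +
    (-1015:ℂ)*t⁻¹*u41^4 +
    (190:ℂ)*t⁻¹*u41^5 +
    (-215:ℂ)*t⁻¹*u41^6 +
    (25:ℂ)*t⁻¹*u41^7 +
    (146:ℂ)*t⁻¹*u41^8 +
    (-171:ℂ)*t⁻¹*u41^9 +
    (741:ℂ)*t⁻¹*u41^10 +
    (-570:ℂ)*t⁻¹*u41^11 +
    (928:ℂ)*t⁻¹*u41^12 +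
    (-358:ℂ)*t⁻¹*u41^13 +
    (350:ℂ)*t⁻¹*u41^14 +
    (8:ℂ)*t⁻¹*u41^15 +
    (3:ℂ)*t⁻¹*u41^16 +
    (-11:ℂ)*t⁻¹*u41^17 +
    (12:ℂ)*t⁻¹*u41^18 +
    (-1:ℂ)*t⁻¹*u41^19 +
    (1:ℂ)*t⁻¹*u41^21 +
    (-1:ℂ)*t⁻¹*u41^22 +
    (-98:ℂ)*t⁻¹^2 +
    (98:ℂ)*t⁻¹^2*u41 +
    (180:ℂ)*t⁻¹^2*u41^2 +
    (-278:ℂ)*t⁻¹^2*u41^3 +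
    (215:ℂ)*t⁻¹^2*u41^4 +
    (63:ℂ)*t⁻¹^2*u41^5 +
    (-182:ℂ)*t⁻¹^2*u41^6 +
    (119:ℂ)*t⁻¹^2*u41^7 +
    (-159:ℂ)*t⁻¹^2*u41^8 +
    (40:ℂ)*t⁻¹^2*u41^9 +
    (-9:ℂ)*t⁻¹^2*u41^10 +
    (-31:ℂ)*t⁻¹^2*u41^11 +
    (64:ℂ)*t⁻¹^2*u41^12 +
    (-33:ℂ)*t⁻¹^2*u41^13 +
    (33:ℂ)*t⁻¹^2*u41^14 +
    (18:ℂ)*t⁻¹^3 +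
    (-18:ℂ)*t⁻¹^3*u41 +
    (-20:ℂ)*t⁻¹^3*u41^2 +
    (38:ℂ)*t⁻¹^3*u41^3 +
    (-17:ℂ)*t⁻¹^3*u41^4 +
    (-21:ℂ)*t⁻¹^3*u41^5 +
    (30:ℂ)*t⁻¹^3*u41^6 +
    (-9:ℂ)*t⁻¹^3*u41^7 +
    (1:ℂ)*t⁻¹^3*u41^8 +
    (8:ℂ)*t⁻¹^3*u41^9 +
    (-9:ℂ)*t⁻¹^3*u41^10 +
    (1:ℂ)*t⁻¹^3*u41^11 +
    (-1:ℂ)*t⁻¹^3*u41^13 +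
    (1:ℂ)*t⁻¹^3*u41^14 +
    (225:ℂ)*t +
    (-225:ℂ)*t*u41 +
    (-600:ℂ)*t*u41^2 +
    (825:ℂ)*t*u41^3 +
    (-1015:ℂ)*t*u41^4 +
    (190:ℂ)*t*u41^5 +
    (-215:ℂ)*t*u41^6 +
    (25:ℂ)*t*u41^7 +
    (146:ℂ)*t*u41^8 +
    (-171:ℂ)*t*u41^9 +
    (741:ℂ)*t*u41^10 +
    (-570:ℂ)*t*u41^11 +
    (928:ℂ)*t*u41^12 +
    (-358:ℂ)*t*u41^13 +
    (350:ℂ)*t*u41^14 +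
    (8:ℂ)*t*u41^15 +
    (3:ℂ)*t*u41^16 +
    (-11:ℂ)*t*u41^17 +
    (12:ℂ)*t*u41^18 +
    (-1:ℂ)*t*u41^19 +
    (1:ℂ)*t*u41^21 +
    (-1:ℂ)*t*u41^22 +
    (-98:ℂ)*t^2 +
    (98:ℂ)*t^2*u41 +
    (180:ℂ)*t^2*u41^2 +
    (-278:ℂ)*t^2*u41^3 +
    (215:ℂ)*t^2*u41^4 +
    (63:ℂ)*t^2*u41^5 +
    (-182:ℂ)*t^2*u41^6 +
    (119:ℂ)*t^2*u41^7 +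
    (-159:ℂ)*t^2*u41^8 +
    (40:ℂ)*t^2*u41^9 +
    (-9:ℂ)*t^2*u41^10 +
    (-31:ℂ)*t^2*u41^11 +
    (64:ℂ)*t^2*u41^12 +
    (-33:ℂ)*t^2*u41^13 +
    (33:ℂ)*t^2*u41^14 +
    (18:ℂ)*t^3 +
    (-18:ℂ)*t^3*u41 +
    (-20:ℂ)*t^3*u41^2 +
    (38:ℂ)*t^3*u41^3 +
    (-17:ℂ)*t^3*u41^4 +
    (-21:ℂ)*t^3*u41^5 +
    (30:ℂ)*t^3*u41^6 +
    (-9:ℂ)*t^3*u41^7 +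
    (1:ℂ)*t^3*u41^8 +
    (8:ℂ)*t^3*u41^9 +
    (-9:ℂ)*t^3*u41^10 +
    (1:ℂ)*t^3*u41^11 +
    (-1:ℂ)*t^3*u41^13 +
    (1:ℂ)*t^3*u41^14) * hu

set_option maxHeartbeats 4000000 in
lemma hden5 (t : ℂ) : det (t • B5 - (1 : Matrix (Fin 5) (Fin 5) ℂ)) = (t - 1)^5 := by
  simp [B5, Fin.val_succ, Matrix.det_succ_row_zero, Fin.sum_univ_succ, Fin.succAbove, Fin.castSucc, Fin.castAdd, Fin.castLE, Matrix.smul_apply, Matrix.one_apply, smul_eq_mul]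
  ring


lemma hD3 (t : ℂ) (ht : t ≠ 0) (h1 : t ≠ 1) :
    Δ₃ t = -((t^2 - 5*t + 1) * (t - 1)) / t^3 := by
  have h1' : t - 1 ≠ 0 := sub_ne_zero.mpr h1
  rw [Δ₃, hnum3 t ht, hden3]
  field_simp

lemma hD5 (t : ℂ) (ht : t ≠ 0) (h1 : t ≠ 1) :
    Δ₅ t = -((t^4 - 9*t^3 + 44*t^2 - 9*t + 1) * (t - 1)) / t^5 := by
  have h1' : t - 1 ≠ 0 := sub_ne_zero.mpr h1
  rw [Δ₅, hnum5 t ht, hden5]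
  field_simp

lemma hfilter : ∀ᶠ t : ℂ in nhdsWithin 1 {(1 : ℂ)}ᶜ, t ≠ 0 ∧ t ≠ 1 ∧ t^2 - 5*t + 1 ≠ 0 := by
  have h1 : ∀ᶠ t : ℂ in nhdsWithin 1 {(1 : ℂ)}ᶜ, t ≠ 1 := by
    filter_upwards [self_mem_nhdsWithin] with t ht using ht
  have h0 : ∀ᶠ t : ℂ in nhds (1 : ℂ), t ≠ 0 := eventually_ne_nhds (by norm_num)
  have h2 : ∀ᶠ t : ℂ in nhds (1 : ℂ), t^2 - 5*t + 1 ≠ 0 := by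
    have hc : ContinuousAt (fun t : ℂ => t^2 - 5*t + 1) 1 := by fun_prop
    have : (fun t : ℂ => t^2 - 5*t + 1) 1 ≠ 0 := by norm_num
    exact hc.eventually_ne this
  filter_upwards [h1, h0.filter_mono nhdsWithin_le_nhds, h2.filter_mono nhdsWithin_le_nhds] with
    t ht1 ht0 ht2 using ⟨ht0, ht1, ht2⟩

lemma lim3 : Tendsto (fun t : ℂ => Δ₃ t / (t - 1)) (nhdsWithin 1 {(1 : ℂ)}ᶜ) (nhds 3) := by
  have hc : ContinuousAt (fun t : ℂ => -(t^2 - 5*t + 1) / t^3) 1 :=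
    ContinuousAt.div (by fun_prop) (by fun_prop) (by norm_num)
  have hv : (fun t : ℂ => -(t^2 - 5*t + 1) / t^3) 1 = 3 := by norm_num
  have key : Tendsto (fun t : ℂ => -(t^2 - 5*t + 1) / t^3) (nhdsWithin 1 {(1 : ℂ)}ᶜ) (nhds 3) := by
    rw [← hv]; exact hc.tendsto.mono_left nhdsWithin_le_nhds
  refine key.congr' ?_
  filter_upwards [hfilter] with t ⟨ht0, ht1, _⟩
  rw [hD3 t ht0 ht1]
  have h1' : t - 1 ≠ 0 := sub_ne_zero.mpr ht1
  field_simp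

lemma lim5 : Tendsto (fun t : ℂ => Δ₅ t / (t - 1)) (nhdsWithin 1 {(1 : ℂ)}ᶜ) (nhds (-28)) := by
  have hc : ContinuousAt (fun t : ℂ => -(t^4 - 9*t^3 + 44*t^2 - 9*t + 1) / t^5) 1 :=
    ContinuousAt.div (by fun_prop) (by fun_prop) (by norm_num)
  have hv : (fun t : ℂ => -(t^4 - 9*t^3 + 44*t^2 - 9*t + 1) / t^5) 1 = -28 := by norm_num
  have key : Tendsto (fun t : ℂ => -(t^4 - 9*t^3 + 44*t^2 - 9*t + 1) / t^5)
      (nhdsWithin 1 {(1 : ℂ)}ᶜ) (nhds (-28)) := by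
    rw [← hv]; exact hc.tendsto.mono_left nhdsWithin_le_nhds
  refine key.congr' ?_
  filter_upwards [hfilter] with t ⟨ht0, ht1, _⟩
  rw [hD5 t ht0 ht1]
  have h1' : t - 1 ≠ 0 := sub_ne_zero.mpr ht1
  field_simp

lemma limratio : Tendsto (fun t : ℂ => Δ₅ t / Δ₃ t) (nhdsWithin 1 {(1 : ℂ)}ᶜ)
    (nhds (-28 / 3)) := by
  have hc : ContinuousAt
      (fun t : ℂ => (t^4 - 9*t^3 + 44*t^2 - 9*t + 1) / (t^2 * (t^2 - 5*t + 1))) 1 :=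
    ContinuousAt.div (by fun_prop) (by fun_prop) (by norm_num)
  have hv : (fun t : ℂ => (t^4 - 9*t^3 + 44*t^2 - 9*t + 1) / (t^2 * (t^2 - 5*t + 1))) 1
      = -28 / 3 := by norm_num
  have key : Tendsto (fun t : ℂ => (t^4 - 9*t^3 + 44*t^2 - 9*t + 1) / (t^2 * (t^2 - 5*t + 1)))
      (nhdsWithin 1 {(1 : ℂ)}ᶜ) (nhds (-28 / 3)) := by
    rw [← hv]; exact hc.tendsto.mono_left nhdsWithin_le_nhds
  refine key.congr' ?_
  filter_upwards [hfilter] with t ⟨ht0, ht1, ht2⟩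
  rw [hD5 t ht0 ht1, hD3 t ht0 ht1]
  have h1' : t - 1 ≠ 0 := sub_ne_zero.mpr ht1
  field_simp

theorem A_K5_at_one :
    (∃ c : ℂ, c ≠ 0 ∧
      Tendsto (fun t : ℂ => Δ₃ t / (t - 1)) (nhdsWithin 1 {(1 : ℂ)}ᶜ) (nhds c)) ∧
    (∃ c : ℂ, c ≠ 0 ∧
      Tendsto (fun t : ℂ => Δ₅ t / (t - 1)) (nhdsWithin 1 {(1 : ℂ)}ᶜ) (nhds c)) ∧
    Tendsto (fun t : ℂ => Δ₅ t / Δ₃ t) (nhdsWithin 1 {(1 : ℂ)}ᶜ) (nhds (-28 / 3)) ∧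
    ‖(-28 / 3 : ℂ)‖ = 28 / 3 := by
  refine ⟨⟨3, by norm_num, lim3⟩, ⟨-28, by norm_num, lim5⟩, limratio, ?_⟩
  have : (-28 / 3 : ℂ) = ((-28 / 3 : ℝ) : ℂ) := by norm_num
  rw [this, Complex.norm_real, Real.norm_eq_abs]
  rw [abs_div]
  norm_num
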